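/- Consider the adaptive exponentially weighted forecaster with abstention, whose learning rates are η_1 = 1 and, with d_0 = 1 and d_t = d_{t−1} + 1[1 − 2c_t ≤ η_t], η_{t+1} = min(√(log N / d_t), 1). Then for every η ∈ (0, 1] satisfying (log N)/η ≥ (η/8)·∑_{t=1}^T 1[1 − 2c_t ≤ η], its regret satisfies R_T = ∑_{t=1}^T E[ℓ̂_t] − min_{i∈[N]} ∑_{t=1}^T ℓ_{t,i} ≤ (15/4)·(log N)/η + (5/4)·√(log N). -/

import Mathlib

noncomputable section

/-- Binary loss of expert `i` in round `t`: `1[y_{t,i} ≠ y_t]`. -/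
def expertLoss {N : ℕ} (adv : ℕ → Fin N → ℝ) (y : ℕ → ℝ) (t : ℕ) (i : Fin N) : ℝ :=
  if adv t i = y t then 0 else 1

/-- The counter `d_t` of the adaptive algorithm (0-indexed rounds): `d` starts at `1`
and is incremented in round `s` whenever `1 - 2 c_s ≤ η_s`, where `η_0 = 1` and
`η_s = min(√(log N / d_s), 1)` for `s ≥ 1` (here `d_s` is the counter before round `s`). -/
def adaD (N : ℕ) (c : ℕ → ℝ) : ℕ → ℕ
  | 0 => 1
  | s + 1 =>
      adaD N c s +
        (if 1 - 2 * c s ≤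
            (if s = 0 then (1 : ℝ) else min (Real.sqrt (Real.log N / adaD N c s)) 1)
          then 1 else 0)

/-- The adaptive learning rate used in round `s` (0-indexed): `η_0 = 1` and
`η_s = min(√(log N / d_s), 1)` for `s ≥ 1`. -/
def adaEta (N : ℕ) (c : ℕ → ℝ) (s : ℕ) : ℝ :=
  if s = 0 then 1 else min (Real.sqrt (Real.log N / adaD N c s)) 1

/-- Normalized exponential weight `q_{t,i}` of expert `i` in round `t`, computed with
the adaptive learning rate `η_t`. -/
def adaQ {N : ℕ} (c : ℕ → ℝ) (adv : ℕ → Fin N → ℝ) (y : ℕ → ℝ) (t : ℕ) (i : Fin N) : ℝ :=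
  Real.exp (-(adaEta N c t) * ∑ k ∈ Finset.range t, expertLoss adv y k i) /
    ∑ j, Real.exp (-(adaEta N c t) * ∑ k ∈ Finset.range t, expertLoss adv y k j)

/-- Aggregated prediction `p_t` of the adaptive algorithm. -/
def adaP {N : ℕ} (c : ℕ → ℝ) (adv : ℕ → Fin N → ℝ) (y : ℕ → ℝ) (t : ℕ) : ℝ :=
  ∑ i, adaQ c adv y t i * adv t i

/-- Expected per-round loss of the adaptive exponentially weighted forecaster with
abstention: `α_t c_t + (1 - α_t)·1[k_t^* ≠ y_t]` with `p* = max(p_t, 1 - p_t)`,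
`k_t^* = 1[p_t ≥ 1/2]`, `α_t = 2(1 - p*)`. -/
def adaAlgLoss {N : ℕ} (c : ℕ → ℝ) (adv : ℕ → Fin N → ℝ) (y : ℕ → ℝ) (t : ℕ) : ℝ :=
  let p := adaP c adv y t
  let pstar := max p (1 - p)
  let kstar : ℝ := if (1 : ℝ) / 2 ≤ p then 1 else 0
  let α := 2 * (1 - pstar)
  α * c t + (1 - α) * (if kstar = y t then 0 else 1)

end

noncomputable section AuxProof
open Real in
lemma hoeffding_bernoulli {s : ℝ} (hs0 : 0 ≤ s) (hs1 : s ≤ 1) {η : ℝ} (hη : 0 ≤ η) :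
    Real.log (1 - s + s * Real.exp (-η)) ≤ -η * s + η ^ 2 / 8 := by
  set E : ℝ → ℝ := fun x => 1 - s + s * Real.exp (-x) with hEdef
  have hEpos : ∀ x, 0 < E x := by
    intro x
    rcases eq_or_lt_of_le hs1 with h | h
    · have : E x = Real.exp (-x) := by simp [hEdef, ← h]
      rw [this]; exact Real.exp_pos _
    · have : 0 < 1 - s := by linarith
      have := mul_nonneg hs0 (Real.exp_pos (-x)).le
      simp only [hEdef]; linarith
  have hE' : ∀ x, HasDerivAt E (-(s * Real.exp (-x))) x := by
    intro x
    have h1 : HasDerivAt (fun y : ℝ => Real.exp (-y)) (-Real.exp (-x)) x := by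
      simpa [Function.comp_def] using (Real.hasDerivAt_exp (-x)).comp x (hasDerivAt_neg x)
    have := ((h1.const_mul s).const_add (1 - s))
    exact this.congr_deriv (by ring)
  set G : ℝ → ℝ := fun x => -(s * Real.exp (-x)) / E x + s - x / 4 with hGdef
  have hF' : ∀ x, HasDerivAt (fun y => Real.log (E y) + y * s - y ^ 2 / 8) (G x) x := by
    intro x
    have hlog : HasDerivAt (fun y => Real.log (E y)) (-(s * Real.exp (-x)) / E x) x :=
      (hE' x).log (hEpos x).ne'
    have h2 : HasDerivAt (fun y : ℝ => y * s) s x := by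
      simpa using (hasDerivAt_id x).mul_const s
    have h3 : HasDerivAt (fun y : ℝ => y ^ 2 / 8) (x / 4) x := by
      have := (hasDerivAt_pow 2 x).div_const 8
      exact this.congr_deriv (by ring)
    exact (hlog.add h2).sub h3
  have hG' : ∀ x, HasDerivAt G
      ((s * Real.exp (-x) * E x - (s * Real.exp (-x)) ^ 2) / (E x) ^ 2 - 1 / 4) x := by
    intro x
    have hu : HasDerivAt (fun y => -(s * Real.exp (-y))) (s * Real.exp (-x)) x := by
      have h1 : HasDerivAt (fun y : ℝ => Real.exp (-y)) (-Real.exp (-x)) x := by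
        simpa [Function.comp_def] using (Real.hasDerivAt_exp (-x)).comp x (hasDerivAt_neg x)
      have : HasDerivAt (fun y => -1 * (s * Real.exp (-y))) (-1 * (s * -Real.exp (-x))) x :=
        ((h1.const_mul s).const_mul (-1))
      convert this using 1; · ext y; ring
      · ring
    have hdiv := hu.div (hE' x) (hEpos x).ne'
    have h4 : HasDerivAt (fun y : ℝ => y / 4) (1 / 4) x := by
      simpa using (hasDerivAt_id x).div_const 4
    have := (hdiv.add_const s).sub h4
    exact this.congr_deriv (by ring)
  have key : ∀ a e : ℝ, 0 ≤ a → a ≤ e → 0 < e → (a * e - a ^ 2) / e ^ 2 - 1 / 4 ≤ 0 := by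
    intro a e ha0 hae he
    have he2 : (0:ℝ) < e ^ 2 := pow_pos he 2
    rw [sub_nonpos, div_le_iff₀ he2]
    nlinarith [sq_nonneg (e - 2 * a)]
  have hG'nonpos : ∀ x, (s * Real.exp (-x) * E x - (s * Real.exp (-x)) ^ 2) / (E x) ^ 2 - 1 / 4 ≤ 0 := by
    intro x
    refine key _ _ (mul_nonneg hs0 (Real.exp_pos _).le) ?_ (hEpos x)
    have h1 : Real.exp (-x) > 0 := Real.exp_pos _
    have : (0:ℝ) ≤ 1 - s := by linarith
    simp only [hEdef]; linarith
  have hGanti : Antitone G := by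
    apply antitone_of_deriv_nonpos
    · intro x; exact (hG' x).differentiableAt
    · intro x; rw [(hG' x).deriv]; exact hG'nonpos x
  have hG0 : G 0 = 0 := by
    simp [hGdef, hEdef]
  have hGnonpos : ∀ x ∈ Set.Ici (0:ℝ), G x ≤ 0 := fun x hx => hG0 ▸ hGanti hx
  set F : ℝ → ℝ := fun y => Real.log (E y) + y * s - y ^ 2 / 8 with hFdef
  have hFanti : AntitoneOn F (Set.Ici 0) := by
    apply antitoneOn_of_deriv_nonpos (convex_Ici 0)
    · exact fun x _ => ((hF' x).differentiableAt).continuousAt.continuousWithinAt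
    · exact fun x _ => ((hF' x).differentiableAt).differentiableWithinAt
    · intro x hx
      rw [(hF' x).deriv]
      exact hGnonpos x (le_of_lt (by simpa using hx))
  have hF0 : F 0 = 0 := by simp [hFdef, hEdef]
  have := hFanti (Set.self_mem_Ici) (by exact hη) hη
  rw [hF0] at this
  have : Real.log (E η) + η * s - η ^ 2 / 8 ≤ 0 := this
  simp only [hEdef] at this
  linarith

lemma exp_neg_le_quad {η : ℝ} (hη : 0 ≤ η) : Real.exp (-η) ≤ 1 - η + η ^ 2 := by
  have h1 : 1 + η ≤ Real.exp η := by linarith [Real.add_one_le_exp η]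
  have h3 : (0:ℝ) < 1 + η := by linarith
  have h4 : Real.exp (-η) ≤ 1 / (1 + η) := by
    rw [Real.exp_neg, inv_eq_one_div]
    exact one_div_le_one_div_of_le h3 h1
  have h5 : 1 / (1 + η) ≤ 1 - η + η ^ 2 := by
    rw [div_le_iff₀ h3]; nlinarith
  linarith

lemma exp_le_quad {η : ℝ} (hη : 0 ≤ η) (hη1 : η ≤ 1) : Real.exp η ≤ 1 + η + η ^ 2 := by
  have h := Real.exp_bound (x := η) (by rw [abs_of_nonneg hη]; exact hη1) (n := 2) (by norm_num)
  rw [abs_le] at h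
  have h2 : ∑ i ∈ Finset.range 2, η ^ i / (Nat.factorial i) = 1 + η := by
    simp [Finset.sum_range_succ, Nat.factorial]
  rw [h2, abs_of_nonneg hη] at h
  have h3 := h.2
  norm_num [Nat.factorial] at h3
  nlinarith [sq_nonneg η]

lemma sum_inv_sqrt_le (m : ℕ) (hm : 1 ≤ m) :
    ∑ k ∈ Finset.Ico 2 (m + 1), 1 / Real.sqrt (k : ℝ) ≤ 2 * Real.sqrt (m : ℝ) - 2 := by
  induction m with
  | zero => omega
  | succ n ih =>
    rcases Nat.lt_or_ge 1 (n+1) with h | h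
    swap
    · have : n = 0 := by omega
      subst this
      norm_num [Finset.Ico_self]
    have hn : 1 ≤ n := by omega
    have hstep : ∑ k ∈ Finset.Ico 2 (n + 1 + 1), 1 / Real.sqrt (k : ℝ)
        = (∑ k ∈ Finset.Ico 2 (n + 1), 1 / Real.sqrt (k : ℝ)) + 1 / Real.sqrt ((n+1 : ℕ) : ℝ) := by
      exact Finset.sum_Ico_succ_top (by omega) _
    rw [hstep]
    have key : 1 / Real.sqrt ((n+1 : ℕ) : ℝ) ≤ 2 * Real.sqrt ((n+1 : ℕ) : ℝ) - 2 * Real.sqrt (n : ℝ) := by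
      have hpos : 0 < Real.sqrt ((n+1:ℕ):ℝ) := Real.sqrt_pos.2 (by push_cast; positivity)
      rw [div_le_iff₀ hpos]
      have e1 : Real.sqrt ((n+1:ℕ):ℝ) * Real.sqrt ((n+1:ℕ):ℝ) = ((n+1:ℕ):ℝ) :=
        Real.mul_self_sqrt (by positivity)
      have hmul : (Real.sqrt ((n:ℕ):ℝ) * Real.sqrt ((n+1:ℕ):ℝ))^2 = ((n:ℕ):ℝ) * ((n+1:ℕ):ℝ) := by
        rw [mul_pow, Real.sq_sqrt (by positivity), Real.sq_sqrt (by positivity)]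
      have cast0 : ((n+1:ℕ):ℝ) = ((n:ℕ):ℝ) + 1 := by push_cast; ring
      rw [cast0] at hmul e1 ⊢
      have hX : Real.sqrt ((n:ℕ):ℝ) * Real.sqrt (((n:ℕ):ℝ) + 1) ≤ ((n:ℕ):ℝ) + 1/2 := by
        nlinarith [hmul, sq_nonneg (Real.sqrt ((n:ℕ):ℝ) * Real.sqrt (((n:ℕ):ℝ)+1) - (((n:ℕ):ℝ) + 1/2)),
          Real.sqrt_nonneg ((n:ℕ):ℝ), Real.sqrt_nonneg (((n:ℕ):ℝ)+1), (Nat.one_le_cast (α := ℝ)).2 hn]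
      nlinarith [hX, e1]
    have := ih hn
    linarith

lemma div_le_div_of_nonneg_right' {x y : ℝ} (h : x ≤ y) : x / 4 ≤ y / 4 := by linarith

lemma ratio_pos {s η : ℝ} (hs0 : 0 ≤ s) (hs1 : s ≤ 1) :
    0 < 1 - (1 - Real.exp (-η)) * s := by
  have hz : 0 < Real.exp (-η) := Real.exp_pos _
  rcases le_or_gt (Real.exp (-η)) 1 with h | h
  · nlinarith [mul_le_mul_of_nonneg_left hs1 (by linarith : (0:ℝ) ≤ 1 - Real.exp (-η))]
  · nlinarith [mul_nonpos_of_nonpos_of_nonneg (by linarith : 1 - Real.exp (-η) ≤ 0) hs0]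

lemma core_counted {s η : ℝ} (hs0 : 0 ≤ s) (hs1 : s ≤ 1) (hη0 : 0 < η) :
    s ≤ -Real.log (1 - (1 - Real.exp (-η)) * s) / η + η / 8 := by
  have h := hoeffding_bernoulli hs0 hs1 hη0.le
  have he : (1:ℝ) - (1 - Real.exp (-η)) * s = 1 - s + s * Real.exp (-η) := by ring
  rw [he]
  have h2 : s - η / 8 ≤ -Real.log (1 - s + s * Real.exp (-η)) / η := by
    rw [le_div_iff₀ hη0]
    nlinarith [h]
  linarith

lemma core_uncounted_correct {s c η : ℝ} (hs0 : 0 ≤ s) (hs1 : s ≤ 1) (hc0 : 0 ≤ c)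
    (hη0 : 0 < η) (hcond : η < 1 - 2 * c) :
    2 * c * s ≤ -Real.log (1 - (1 - Real.exp (-η)) * s) / η := by
  set u := (1 - Real.exp (-η)) * s with hu
  have hpos : 0 < 1 - u := ratio_pos hs0 hs1
  have hlog : Real.log (1 - u) ≤ -u := by
    have h1 : 1 - u ≤ Real.exp (-u) := by linarith [Real.add_one_le_exp (-u)]
    calc Real.log (1 - u) ≤ Real.log (Real.exp (-u)) := Real.log_le_log hpos h1
      _ = -u := Real.log_exp _
  have hquad : η * (1 - η) ≤ 1 - Real.exp (-η) := by
    have := exp_neg_le_quad hη0.le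
    nlinarith
  have hub : 2 * c * s * η ≤ u := by
    have h2 : 2 * c ≤ 1 - η := by linarith
    have h3 : η * (1 - η) * s ≤ (1 - Real.exp (-η)) * s :=
      mul_le_mul_of_nonneg_right hquad hs0
    nlinarith [mul_le_mul_of_nonneg_right (mul_le_mul_of_nonneg_right h2 hs0) hη0.le]
  rw [le_div_iff₀ hη0]
  linarith
lemma core_uncounted_wrong {s c η : ℝ} (hs0 : 0 ≤ s) (hs1 : s ≤ 1) (hc0 : 0 ≤ c)
    (hη0 : 0 < η) (hη1 : η ≤ 1) (hcond : η < 1 - 2 * c) :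
    1 - 2 * (1 - s) * (1 - c) ≤ -Real.log (1 - (1 - Real.exp (-η)) * s) / η := by
  have hz : 0 < Real.exp (-η) := Real.exp_pos _
  set x := 1 - s with hx
  have hx0 : 0 ≤ x := by linarith
  have hfact : 1 - (1 - Real.exp (-η)) * s = Real.exp (-η) * (1 + x * (Real.exp η - 1)) := by
    have : Real.exp (-η) * Real.exp η = 1 := by
      rw [← Real.exp_add]; simp
    nlinarith [this]
  have hego : (0:ℝ) ≤ Real.exp η - 1 := by
    have : (1:ℝ) ≤ Real.exp η := by
      rw [← Real.exp_zero]; exact Real.exp_le_exp.2 hη0.le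
    linarith
  have hupos : 0 < 1 + x * (Real.exp η - 1) := by positivity
  have hlog : Real.log (1 - (1 - Real.exp (-η)) * s) ≤ -η + x * (Real.exp η - 1) := by
    rw [hfact, Real.log_mul hz.ne' hupos.ne', Real.log_exp]
    have := Real.log_le_sub_one_of_pos hupos
    linarith
  have hexp : Real.exp η - 1 ≤ η * (2 - 2 * c) := by
    have h1 := exp_le_quad hη0.le hη1
    have h2 : 1 + η ≤ 2 - 2 * c := by linarith
    nlinarith [hη0.le]
  have hfinal : Real.log (1 - (1 - Real.exp (-η)) * s) ≤ -η + x * (η * (2 - 2 * c)) := by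
    have := mul_le_mul_of_nonneg_left hexp hx0
    linarith
  rw [le_div_iff₀ hη0]
  nlinarith [hfinal]

def Wt (L : Fin N → ℝ) (η : ℝ) : ℝ := ∑ j : Fin N, Real.exp (-η * L j)

def Phi (N : ℕ) (L : Fin N → ℝ) (η : ℝ) : ℝ := (Real.log N - Real.log (Wt L η)) / η


def cumLoss {N : ℕ} (adv : ℕ → Fin N → ℝ) (y : ℕ → ℝ) (t : ℕ) (i : Fin N) : ℝ :=
  ∑ k ∈ Finset.range t, expertLoss adv y k i

lemma Wt_pos (hN : 1 ≤ N) (L : Fin N → ℝ) (η : ℝ) : 0 < Wt L η := by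
  have : Nonempty (Fin N) := Fin.pos_iff_nonempty.1 (by omega)
  exact Finset.sum_pos (fun j _ => Real.exp_pos _) Finset.univ_nonempty


lemma Phi_le (hN : 1 ≤ N) (L : Fin N → ℝ) {η : ℝ} (hη : 0 < η) (i : Fin N) :
    Phi N L η ≤ L i + Real.log N / η := by
  have h1 : Real.exp (-η * L i) ≤ Wt L η := by
    apply Finset.single_le_sum (fun j _ => (Real.exp_pos _).le) (Finset.mem_univ i)
  have h2 : -η * L i ≤ Real.log (Wt L η) := by
    rw [← Real.log_exp (-η * L i)]
    exact Real.log_le_log (Real.exp_pos _) h1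
  have h3 : Real.log N - Real.log (Wt L η) ≤ Real.log N + η * L i := by linarith
  have h4 : (Real.log N + η * L i) / η = L i + Real.log N / η := by field_simp; ring
  rw [Phi, ← h4]
  exact (div_le_div_iff_of_pos_right hη).2 h3


lemma Phi_anti (hN : 1 ≤ N) (L : Fin N → ℝ) {a b : ℝ}
    (ha : 0 < a) (hab : a ≤ b) : Phi N L b ≤ Phi N L a := by
  have hb : 0 < b := lt_of_lt_of_le ha hab
  have hNpos : (0:ℝ) < N := by exact_mod_cast Nat.lt_of_lt_of_le Nat.zero_lt_one hN
  have hWa := Wt_pos hN L a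
  have hWb := Wt_pos hN L b
  have key : Wt L a / N ≤ (Wt L b / N) ^ (a / b) := by
    have hmean := Real.arith_mean_le_rpow_mean (Finset.univ : Finset (Fin N))
      (fun _ => 1 / (N:ℝ)) (fun j => Real.exp (-a * L j))
      (fun i _ => by positivity)
      (by simp [Finset.sum_const, Finset.card_univ]; field_simp)
      (fun i _ => (Real.exp_pos _).le) (p := b / a)
      ((one_le_div ha).2 hab)
    have e1 : ∑ i : Fin N, (1 / (N:ℝ)) * Real.exp (-a * L i) = Wt L a / N := by
      rw [Wt, Finset.sum_div]
      congr 1; ext i; ring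
    have e2 : ∀ i : Fin N, Real.exp (-a * L i) ^ (b / a) = Real.exp (-b * L i) := by
      intro i
      rw [← Real.exp_mul]
      congr 1; field_simp
    have e3 : ∑ i : Fin N, (1 / (N:ℝ)) * Real.exp (-a * L i) ^ (b / a) = Wt L b / N := by
      rw [Wt, Finset.sum_div]
      congr 1; ext i; rw [e2 i]; ring
    rw [e1, e3] at hmean
    have e4 : (1 : ℝ) / (b / a) = a / b := by field_simp
    rwa [e4] at hmean
  have hlog : Real.log (Wt L a / N) / a ≤ Real.log (Wt L b / N) / b := by
    have h5 : Real.log (Wt L a / N) ≤ (a/b) * Real.log (Wt L b / N) := by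
      calc Real.log (Wt L a / N) ≤ Real.log ((Wt L b / N) ^ (a / b)) :=
            Real.log_le_log (by positivity) key
        _ = (a/b) * Real.log (Wt L b / N) := Real.log_rpow (by positivity) _
    rw [div_le_div_iff₀ ha hb]
    calc Real.log (Wt L a / N) * b ≤ ((a/b) * Real.log (Wt L b / N)) * b := by
          exact mul_le_mul_of_nonneg_right h5 hb.le
      _ = Real.log (Wt L b / N) * a := by field_simp
  have ed : ∀ η : ℝ, Phi N L η = -(Real.log (Wt L η / N) / η) := by
    intro η
    rw [Phi, Real.log_div (Wt_pos hN L η).ne' hNpos.ne']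
    ring
  rw [ed a, ed b]
  linarith
lemma adaD_pos (N : ℕ) (c : ℕ → ℝ) (t : ℕ) : 1 ≤ adaD N c t := by
  induction t with
  | zero => simp [adaD]
  | succ n ih => rw [adaD]; omega


lemma adaD_succ (N : ℕ) (c : ℕ → ℝ) (s : ℕ) :
    adaD N c (s + 1) = adaD N c s + (if 1 - 2 * c s ≤ adaEta N c s then 1 else 0) := by
  rfl


lemma adaD_mono (N : ℕ) (c : ℕ → ℝ) : Monotone (adaD N c) := by
  apply monotone_nat_of_le_succ
  intro n
  rw [adaD_succ]
  omega


lemma adaEta_pos {N : ℕ} (hN : 2 ≤ N) (c : ℕ → ℝ) (t : ℕ) : 0 < adaEta N c t := by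
  rw [adaEta]
  split
  · norm_num
  · apply lt_min _ one_pos
    apply Real.sqrt_pos.2
    apply div_pos
    · exact Real.log_pos (by exact_mod_cast hN)
    · exact_mod_cast adaD_pos N c t


lemma adaEta_le_one (N : ℕ) (c : ℕ → ℝ) (t : ℕ) : adaEta N c t ≤ 1 := by
  rw [adaEta]; split
  · exact le_refl 1
  · exact min_le_right _ _


lemma adaEta_anti {N : ℕ} (hN : 2 ≤ N) (c : ℕ → ℝ) : Antitone (adaEta N c) := by
  have hlog : 0 ≤ Real.log N := Real.log_nonneg (by exact_mod_cast Nat.one_le_of_lt hN)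
  apply antitone_nat_of_succ_le
  intro n
  rcases Nat.eq_zero_or_pos n with h | h
  · subst h
    have h0 : adaEta N c 0 = 1 := by rw [adaEta]; simp
    rw [h0]
    exact adaEta_le_one N c 1
  · rw [adaEta, adaEta, if_neg (show ¬(n + 1 = 0) by omega), if_neg (show ¬(n = 0) by omega)]
    apply min_le_min _ le_rfl
    apply Real.sqrt_le_sqrt
    apply div_le_div_of_nonneg_left hlog
    · exact_mod_cast adaD_pos N c n
    · exact_mod_cast adaD_mono N c (Nat.le_succ n)


lemma adaD_one (N : ℕ) (c : ℕ → ℝ) (hc0 : 0 ≤ c 0) : adaD N c 1 = 2 := by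
  have h0 : adaEta N c 0 = 1 := by rw [adaEta]; simp
  rw [adaD_succ, if_pos (show 1 - 2 * c 0 ≤ adaEta N c 0 by rw [h0]; linarith)]
  rw [show adaD N c 0 = 1 from rfl]


lemma adaD_ge_two (N : ℕ) (c : ℕ → ℝ) (hc0 : 0 ≤ c 0) {t : ℕ} (ht : 1 ≤ t) :
    2 ≤ adaD N c t := by
  calc 2 = adaD N c 1 := (adaD_one N c hc0).symm
    _ ≤ adaD N c t := adaD_mono N c ht


lemma Phi_zero {N : ℕ} (hN : 1 ≤ N) (adv : ℕ → Fin N → ℝ) (y : ℕ → ℝ) (η : ℝ) :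
    Phi N (cumLoss adv y 0) η = 0 := by
  have hW : Wt (cumLoss adv y 0) η = N := by
    simp [Wt, cumLoss, Finset.card_univ]
  rw [Phi, hW, sub_self, zero_div]


lemma telescope {N : ℕ} (hN : 2 ≤ N) (c : ℕ → ℝ) (adv : ℕ → Fin N → ℝ) (y : ℕ → ℝ) (T : ℕ) :
    ∑ t ∈ Finset.range (T + 1),
        (Phi N (cumLoss adv y (t+1)) (adaEta N c t) - Phi N (cumLoss adv y t) (adaEta N c t))
      ≤ Phi N (cumLoss adv y (T+1)) (adaEta N c T) := by
  have hN1 : 1 ≤ N := by omega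
  induction T with
  | zero =>
    rw [Finset.sum_range_one, Phi_zero hN1]
    simp
  | succ n ih =>
    rw [Finset.sum_range_succ]
    have h1 : Phi N (cumLoss adv y (n+1)) (adaEta N c n)
        ≤ Phi N (cumLoss adv y (n+1)) (adaEta N c (n+1)) :=
      Phi_anti hN1 _ (adaEta_pos hN c (n+1)) (adaEta_anti hN c (Nat.le_succ n))
    linarith
lemma per_round {N : ℕ} (hN : 2 ≤ N) (c : ℕ → ℝ) (adv : ℕ → Fin N → ℝ) (y : ℕ → ℝ)
    (hc : ∀ t, c t ∈ Set.Icc (0 : ℝ) (1 / 2))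
    (hadv : ∀ t i, adv t i = 0 ∨ adv t i = 1) (hy : ∀ t, y t = 0 ∨ y t = 1) (t : ℕ) :
    adaAlgLoss c adv y t ≤
      Phi N (cumLoss adv y (t+1)) (adaEta N c t) - Phi N (cumLoss adv y t) (adaEta N c t)
        + (if 1 - 2 * c t ≤ adaEta N c t then adaEta N c t / 8 else 0) := by
  have hN1 : 1 ≤ N := by omega
  set η := adaEta N c t with hηdef
  have hη0 : 0 < η := adaEta_pos hN c t
  have hη1 : η ≤ 1 := adaEta_le_one N c t
  set L := cumLoss adv y t with hL
  have hWpos : 0 < Wt L η := Wt_pos hN1 L η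
  -- identify adaQ denominator with Wt
  have hQ : ∀ i, adaQ c adv y t i = Real.exp (-η * L i) / Wt L η := by
    intro i; rfl
  have hQnonneg : ∀ i, 0 ≤ adaQ c adv y t i := by
    intro i; rw [hQ]; positivity
  have hQsum : ∑ i, adaQ c adv y t i = 1 := by
    simp only [hQ]
    rw [← Finset.sum_div]
    exact div_self hWpos.ne'
  set s := ∑ i, adaQ c adv y t i * expertLoss adv y t i with hs
  have hl01 : ∀ i, expertLoss adv y t i = 0 ∨ expertLoss adv y t i = 1 := by
    intro i; rw [expertLoss]; split <;> simp
  have hs0 : 0 ≤ s := by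
    apply Finset.sum_nonneg
    intro i _
    rcases hl01 i with h | h <;> rw [h] <;> simp [hQnonneg i]
  have hs1 : s ≤ 1 := by
    rw [hs, ← hQsum]
    apply Finset.sum_le_sum
    intro i _
    rcases hl01 i with h | h <;> rw [h] <;> simp [hQnonneg i]
  -- ratio identity
  have hWnext : Wt (cumLoss adv y (t+1)) η = Wt L η * (1 - (1 - Real.exp (-η)) * s) := by
    have hterm : ∀ j, Real.exp (-η * cumLoss adv y (t+1) j)
        = Real.exp (-η * L j) * (1 - (1 - Real.exp (-η)) * expertLoss adv y t j) := by
      intro j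
      have hc1 : cumLoss adv y (t+1) j = L j + expertLoss adv y t j := by
        rw [hL, cumLoss, cumLoss, Finset.sum_range_succ]
      rw [hc1]
      rcases hl01 j with h | h <;> rw [h]
      · ring_nf
      · rw [mul_add, Real.exp_add]; ring
    rw [Wt]
    simp only [hterm]
    have : ∀ j, Real.exp (-η * L j) * (1 - (1 - Real.exp (-η)) * expertLoss adv y t j)
        = Real.exp (-η * L j) - (1 - Real.exp (-η)) * (Real.exp (-η * L j) * expertLoss adv y t j) := by
      intro j; ring
    simp only [this]
    rw [Finset.sum_sub_distrib, ← Finset.mul_sum]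
    have hws : ∑ j, Real.exp (-η * L j) * expertLoss adv y t j = Wt L η * s := by
      rw [hs, Finset.mul_sum]
      congr 1; ext j
      rw [hQ]
      field_simp
    rw [hws, Wt]
    ring
  have hrpos : 0 < 1 - (1 - Real.exp (-η)) * s := ratio_pos hs0 hs1
  have hPhidiff : Phi N (cumLoss adv y (t+1)) η - Phi N L η
      = -Real.log (1 - (1 - Real.exp (-η)) * s) / η := by
    rw [Phi, Phi, hWnext, Real.log_mul hWpos.ne' hrpos.ne']
    field_simp
    ring
  rw [hPhidiff]
  -- express loss
  have hQadv : ∀ i, adaQ c adv y t i * adv t i = adaQ c adv y t i * (if adv t i = 1 then 1 else 0) := by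
    intro i
    rcases hadv t i with h | h <;> rw [h] <;> norm_num
  set p := adaP c adv y t with hp
  have hc0 := (hc t).1
  have hc12 := (hc t).2
  have hps : (y t = 0 → s = p) ∧ (y t = 1 → s = 1 - p) := by
    constructor
    · intro hy0
      rw [hs, hp, adaP]
      apply Finset.sum_congr rfl
      intro i _
      congr 1
      rw [expertLoss, hy0]
      rcases hadv t i with h | h <;> rw [h] <;> norm_num
    · intro hy1
      rw [hs, hp, adaP, ← hQsum, ← Finset.sum_sub_distrib]
      apply Finset.sum_congr rfl
      intro i _
      rw [expertLoss, hy1]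
      rcases hadv t i with h | h <;> rw [h] <;> norm_num
  -- the loss is one of two shapes
  have hloss : adaAlgLoss c adv y t = 2 * c t * s ∨
      adaAlgLoss c adv y t = 1 - 2 * (1 - s) * (1 - c t) := by
    simp only [adaAlgLoss]
    rw [← hp]
    rcases hy t with hy0 | hy1
    · have hsp := hps.1 hy0
      rcases le_or_gt (1/2 : ℝ) p with hhalf | hhalf
      · right
        rw [hy0, if_pos hhalf, if_neg (one_ne_zero), max_eq_left (by linarith : 1 - p ≤ p), hsp]
        ring
      · left
        rw [hy0, if_neg (by linarith : ¬ (1/2 : ℝ) ≤ p), if_pos rfl,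
          max_eq_right (by linarith : p ≤ 1 - p), hsp]
        ring
    · have hsp := hps.2 hy1
      rcases le_or_gt (1/2 : ℝ) p with hhalf | hhalf
      · left
        rw [hy1, if_pos hhalf, if_pos rfl, max_eq_left (by linarith : 1 - p ≤ p)]
        rw [hsp]; ring
      · right
        rw [hy1, if_neg (by linarith : ¬ (1/2 : ℝ) ≤ p), if_neg (zero_ne_one),
          max_eq_right (by linarith : p ≤ 1 - p), hsp]
        ring
  -- final case split
  by_cases hcnt : 1 - 2 * c t ≤ η
  · rw [if_pos hcnt]
    have hcore := core_counted hs0 hs1 hη0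
    have hle : adaAlgLoss c adv y t ≤ s := by
      rcases hloss with h | h <;> rw [h] <;> nlinarith
    linarith
  · rw [if_neg hcnt, add_zero]
    push_neg at hcnt
    rcases hloss with h | h <;> rw [h]
    · exact core_uncounted_correct hs0 hs1 hc0 hη0 hcnt
    · exact core_uncounted_wrong hs0 hs1 hc0 hη0 hη1 hcnt
open Classical in
/-- the Hoeffding-term sum bound -/
lemma hoef_sum_le {N : ℕ} (hN : 2 ≤ N) (c : ℕ → ℝ) (hc0 : 0 ≤ c 0) (T : ℕ) :
    ∑ t ∈ Finset.range T, (if 1 - 2 * c t ≤ adaEta N c t then adaEta N c t / 8 else 0)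
      ≤ 1 / 8 + (∑ k ∈ Finset.Ico 2 (adaD N c T), Real.sqrt (Real.log N / (k : ℝ))) / 8 := by
  induction T with
  | zero =>
    simp only [Finset.range_zero, Finset.sum_empty]
    have : 0 ≤ ∑ k ∈ Finset.Ico 2 (adaD N c 0), Real.sqrt (Real.log N / (k : ℝ)) :=
      Finset.sum_nonneg fun k _ => Real.sqrt_nonneg _
    linarith
  | succ n ih =>
    rw [Finset.sum_range_succ]
    by_cases hcnt : 1 - 2 * c n ≤ adaEta N c n
    · rw [if_pos hcnt]
      rcases Nat.eq_zero_or_pos n with h0 | h0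
      · subst h0
        have e1 : adaEta N c 0 = 1 := by rw [adaEta]; simp
        have e2 : adaD N c 1 = 2 := by
          rw [adaD_succ, if_pos hcnt]; rfl
        rw [e1, e2]
        simp only [Finset.range_zero, Finset.sum_empty, Finset.Ico_self, zero_add]
        norm_num
      · have hd2 : 2 ≤ adaD N c n := adaD_ge_two N c hc0 h0
        have hDsucc : adaD N c (n+1) = adaD N c n + 1 := by
          rw [adaD_succ, if_pos hcnt]
        have hsplit : ∑ k ∈ Finset.Ico 2 (adaD N c (n+1)), Real.sqrt (Real.log N / (k : ℝ))
            = (∑ k ∈ Finset.Ico 2 (adaD N c n), Real.sqrt (Real.log N / (k : ℝ)))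
              + Real.sqrt (Real.log N / (adaD N c n : ℝ)) := by
          rw [hDsucc]
          exact Finset.sum_Ico_succ_top (by omega) _
        have heta : adaEta N c n ≤ Real.sqrt (Real.log N / (adaD N c n : ℝ)) := by
          rw [adaEta, if_neg (show ¬ (n = 0) by omega)]
          exact min_le_left _ _
        rw [hsplit]
        linarith
    · rw [if_neg hcnt, add_zero]
      have hDsucc : adaD N c (n+1) = adaD N c n := by
        rw [adaD_succ, if_neg hcnt, add_zero]
      rw [hDsucc]
      exact ih


open Classical in
lemma adaD_eq_card (N : ℕ) (c : ℕ → ℝ) (T : ℕ) :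
    adaD N c T = 1 + ((Finset.range T).filter (fun t => 1 - 2 * c t ≤ adaEta N c t)).card := by
  induction T with
  | zero => simp [adaD]
  | succ n ih =>
    rw [adaD_succ, ih, Finset.range_add_one, Finset.filter_insert]
    by_cases h : 1 - 2 * c n ≤ adaEta N c n
    · rw [if_pos h, if_pos h, Finset.card_insert_of_notMem (by simp)]
      omega
    · rw [if_neg h, if_neg h, add_zero]


open Classical in
lemma adaD_strictmono_on (N : ℕ) (c : ℕ → ℝ) {t t' : ℕ}
    (h : 1 - 2 * c t ≤ adaEta N c t) (htt : t < t') : adaD N c t < adaD N c t' := by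
  have h1 : adaD N c (t+1) = adaD N c t + 1 := by rw [adaD_succ, if_pos h]
  calc adaD N c t < adaD N c t + 1 := Nat.lt_succ_self _
    _ = adaD N c (t+1) := h1.symm
    _ ≤ adaD N c t' := adaD_mono N c htt
open Classical in
lemma count_bound {N : ℕ} (hN : 2 ≤ N) (c : ℕ → ℝ) (hc0 : 0 ≤ c 0) (T : ℕ) {η : ℝ}
    (hη0 : 0 < η) (hη1 : η ≤ 1)
    (hgood : (η / 8) * ∑ t ∈ Finset.range T, (if 1 - 2 * c t ≤ η then (1:ℝ) else 0)
      ≤ Real.log N / η) :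
    (adaD N c T : ℝ) ≤ 1 + 6 * Real.sqrt (Real.log N) / η + 9 * (Real.log N / η ^ 2) := by
  have hlog2 : (0.6931471803 : ℝ) < Real.log N := by
    calc (0.6931471803 : ℝ) < Real.log 2 := Real.log_two_gt_d9
      _ ≤ Real.log N := Real.log_le_log (by norm_num) (by exact_mod_cast hN)
  have hlogpos : 0 < Real.log N := by linarith
  set B : ℝ := Real.log N / η ^ 2 with hB
  have hBpos : 0 < B := by positivity
  set ctd : ℕ → Prop := fun t => 1 - 2 * c t ≤ adaEta N c t with hctd
  set A := (Finset.range T).filter (fun t => ctd t) with hA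
  set S := (Finset.range T).filter (fun t => 1 - 2 * c t ≤ η) with hS
  -- S card bound
  have hSsum : ∑ t ∈ Finset.range T, (if 1 - 2 * c t ≤ η then (1:ℝ) else 0) = (S.card : ℝ) := by
    rw [hS, Finset.card_filter]
    push_cast
    apply Finset.sum_congr rfl
    intro t _
    split <;> norm_num
  have hScard : (S.card : ℝ) ≤ 8 * B := by
    rw [hSsum] at hgood
    have hid : Real.log N / η * η = Real.log N := div_mul_cancel₀ _ hη0.ne'
    have hmul := mul_le_mul_of_nonneg_right hgood hη0.le
    rw [hid] at hmul
    rw [hB, show (8:ℝ) * (Real.log N / η ^ 2) = 8 * Real.log N / η ^ 2 by ring,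
      le_div_iff₀ (by positivity : (0:ℝ) < η ^ 2)]
    nlinarith [hmul]
  -- split A
  have hAsplit : A.card = (A.filter (fun t => 1 - 2 * c t ≤ η)).card
      + (A.filter (fun t => ¬ (1 - 2 * c t ≤ η))).card := by
    rw [Finset.card_filter_add_card_filter_not]
  set A1 := A.filter (fun t => 1 - 2 * c t ≤ η) with hA1
  set A2 := A.filter (fun t => ¬ (1 - 2 * c t ≤ η)) with hA2
  have hA1S : A1.card ≤ S.card := by
    apply Finset.card_le_card
    intro t ht
    rw [hA1, Finset.mem_filter] at ht
    rw [hS, Finset.mem_filter]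
    exact ⟨(Finset.mem_filter.1 ht.1).1, ht.2⟩
  -- A2 minus 0 maps injectively into Ico 2 M
  set M := ⌈B⌉₊ with hM
  have hA2' : (A2.erase 0).card ≤ (Finset.Ico 2 M).card := by
    apply Finset.card_le_card_of_injOn (fun t => adaD N c t)
    · intro t ht
      have ht0 : t ≠ 0 := Finset.ne_of_mem_erase ht
      have htA2 := Finset.mem_of_mem_erase ht
      rw [hA2, Finset.mem_filter] at htA2
      obtain ⟨htA, hnot⟩ := htA2
      rw [hA, Finset.mem_filter] at htA
      have hctdt : ctd t := htA.2
      push_neg at hnot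
      have hetat : η < adaEta N c t := lt_of_lt_of_le hnot hctdt
      have heta_le : adaEta N c t ≤ Real.sqrt (Real.log N / (adaD N c t : ℝ)) := by
        rw [adaEta, if_neg ht0]
        exact min_le_left _ _
      have hsq : η ^ 2 < Real.log N / (adaD N c t : ℝ) := by
        have := lt_of_lt_of_le hetat heta_le
        exact (Real.lt_sqrt hη0.le).1 this
      have hdpos : (0:ℝ) < (adaD N c t : ℝ) := by exact_mod_cast adaD_pos N c t
      have hdB : (adaD N c t : ℝ) < B := by
        rw [hB]
        rw [lt_div_iff₀ (by positivity)] at hsq ⊢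
        nlinarith [hsq]
      have hd2 : 2 ≤ adaD N c t := adaD_ge_two N c hc0 (by omega)
      rw [Finset.mem_coe, Finset.mem_Ico]
      constructor
      · exact hd2
      · have : (adaD N c t : ℝ) < (M : ℝ) := lt_of_lt_of_le hdB (Nat.le_ceil B)
        exact_mod_cast this
    · intro t ht t' ht' hEq
      by_contra hne
      have hctdt : ctd t := by
        have := Finset.mem_of_mem_erase ht
        rw [hA2, Finset.mem_filter] at this
        exact (Finset.mem_filter.1 this.1).2
      have hctdt' : ctd t' := by
        have := Finset.mem_of_mem_erase ht'
        rw [hA2, Finset.mem_filter] at this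
        exact (Finset.mem_filter.1 this.1).2
      rcases Nat.lt_or_ge t t' with h | h
      · exact absurd hEq (Nat.ne_of_lt (adaD_strictmono_on N c hctdt h))
      · have h2 : t' < t := by omega
        exact absurd hEq.symm (Nat.ne_of_lt (adaD_strictmono_on N c hctdt' h2))
  have hA2card : A2.card ≤ 1 + (Finset.Ico 2 M).card := by
    by_cases h : 0 ∈ A2
    · have := Finset.card_erase_add_one h
      omega
    · rw [Finset.erase_eq_of_notMem h] at hA2'
      omega
  -- assemble
  have hDcard : adaD N c T = 1 + A.card := adaD_eq_card N c T
  have hsqrt_half : (0.8 : ℝ) ≤ Real.sqrt (Real.log N) := by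
    rw [show (0.8:ℝ) = Real.sqrt 0.64 by rw [show (0.64:ℝ) = 0.8^2 by norm_num, Real.sqrt_sq]; norm_num]
    exact Real.sqrt_le_sqrt (by linarith)
  have hsix : (1:ℝ) ≤ 6 * Real.sqrt (Real.log N) / η := by
    have h1 : (0.8 : ℝ) ≤ Real.sqrt (Real.log N) / η := by
      calc (0.8:ℝ) ≤ Real.sqrt (Real.log N) := hsqrt_half
        _ ≤ Real.sqrt (Real.log N) / η := by
          rw [le_div_iff₀ hη0]
          nlinarith [Real.sqrt_nonneg (Real.log N)]
    calc (1:ℝ) ≤ 6 * 0.8 := by norm_num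
      _ ≤ 6 * (Real.sqrt (Real.log N) / η) := by linarith
      _ = 6 * Real.sqrt (Real.log N) / η := by ring
  rcases Nat.lt_or_ge M 3 with hM3 | hM3
  · -- M ≤ 2 : Ico 2 M card = 0
    have : (Finset.Ico 2 M).card = 0 := by
      rw [Nat.card_Ico]
      omega
    rw [this] at hA2card
    have hD : (adaD N c T : ℝ) ≤ 2 + (S.card : ℝ) := by
      rw [hDcard]
      push_cast
      have : (A.card : ℝ) ≤ (A1.card : ℝ) + (A2.card : ℝ) := by
        rw [hAsplit]; push_cast; linarith
      have h1 : (A1.card : ℝ) ≤ (S.card : ℝ) := by exact_mod_cast hA1S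
      have h2 : (A2.card : ℝ) ≤ 1 := by exact_mod_cast hA2card
      linarith
    linarith [hScard, hBpos, hsix]
  · -- M ≥ 3
    have hMB : (M : ℝ) < B + 1 := Nat.ceil_lt_add_one hBpos.le
    have hIco : ((Finset.Ico 2 M).card : ℝ) ≤ B - 1 := by
      rw [Nat.card_Ico]
      have : ((M - 2 : ℕ) : ℝ) = (M:ℝ) - 2 := by
        rw [Nat.cast_sub (by omega)]
        norm_num
      rw [this]
      linarith
    have hD : (adaD N c T : ℝ) ≤ 2 + (S.card : ℝ) + (B - 1) := by
      rw [hDcard]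
      push_cast
      have h1 : (A1.card : ℝ) ≤ (S.card : ℝ) := by exact_mod_cast hA1S
      have h2 : (A2.card : ℝ) ≤ 1 + ((Finset.Ico 2 M).card : ℝ) := by exact_mod_cast hA2card
      have h3 : (A.card : ℝ) = (A1.card : ℝ) + (A2.card : ℝ) := by
        rw [hAsplit]; push_cast; ring
      linarith
    have h6 : 0 ≤ 6 * Real.sqrt (Real.log N) / η := by positivity
    linarith [hScard]
end AuxProof

set_option maxHeartbeats 1000000 in
/-- Theorem 8 (per-learning-rate form): for every `η ∈ (0,1]` satisfying
`(log N)/η ≥ (η/8)·∑_t 1[1 - 2c_t ≤ η]`, the adaptive algorithm's regret is at most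
`(15/4)·(log N)/η + (5/4)·√(log N)`. -/
theorem adaptive_abstention_regret (N T : ℕ) (hN : 2 ≤ N) (hT : 1 ≤ T) (c : ℕ → ℝ)
    (hc : ∀ t, c t ∈ Set.Icc (0 : ℝ) (1 / 2))
    (adv : ℕ → Fin N → ℝ) (y : ℕ → ℝ)
    (hadv : ∀ t i, adv t i = 0 ∨ adv t i = 1) (hy : ∀ t, y t = 0 ∨ y t = 1)
    (η : ℝ) (hη0 : 0 < η) (hη1 : η ≤ 1)
    (hηgood : (η / 8) * ∑ t ∈ Finset.range T, (if 1 - 2 * c t ≤ η then (1 : ℝ) else 0)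
        ≤ Real.log N / η) :
    (∑ t ∈ Finset.range T, adaAlgLoss c adv y t)
        - ⨅ i : Fin N, ∑ t ∈ Finset.range T, expertLoss adv y t i
      ≤ (15 / 4) * (Real.log N / η) + (5 / 4) * Real.sqrt (Real.log N) := by
  classical
  obtain ⟨T', rfl⟩ : ∃ T', T = T' + 1 := ⟨T - 1, by omega⟩
  have hN1 : 1 ≤ N := by omega
  have hc0 : 0 ≤ c 0 := (hc 0).1
  have hNR : (1:ℝ) < (N:ℝ) := by exact_mod_cast (by omega : 1 < N)
  have hlogpos : 0 < Real.log N := Real.log_pos hNR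
  have hlog2 : (0.6931471803 : ℝ) < Real.log N := by
    calc (0.6931471803 : ℝ) < Real.log 2 := Real.log_two_gt_d9
      _ ≤ Real.log N := Real.log_le_log (by norm_num) (by exact_mod_cast hN)
  set a := Real.sqrt (Real.log N) with hadef
  clear_value a
  have hapos : 0 < a := by rw [hadef]; exact Real.sqrt_pos.2 hlogpos
  have ha8 : (0.8 : ℝ) ≤ a := by
    rw [hadef, show (0.8:ℝ) = Real.sqrt 0.64 by
      rw [show (0.64:ℝ) = 0.8 ^ 2 by norm_num, Real.sqrt_sq (by norm_num)]]
    exact Real.sqrt_le_sqrt (by linarith)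
  have ha2 : a * a = Real.log N := by rw [hadef]; exact Real.mul_self_sqrt hlogpos.le
  set X := a + 3 * (Real.log N / η) with hXdef
  clear_value X
  have hlogη : 0 < Real.log N / η := div_pos hlogpos hη0
  have hXpos : 0 < X := by rw [hXdef]; positivity
  set D := adaD N c (T' + 1) with hDdef
  clear_value D
  have hD2 : 2 ≤ D := by rw [hDdef]; exact adaD_ge_two N c hc0 (by omega)
  have hDpos : (0:ℝ) < (D:ℝ) := by exact_mod_cast (by omega : 0 < D)
  -- the bridge: sqrt(log N * D) ≤ X
  have hcount : (D : ℝ) ≤ 1 + 6 * a / η + 9 * (Real.log N / η ^ 2) := by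
    rw [hadef, hDdef]
    exact count_bound hN c hc0 (T' + 1) hη0 hη1 hηgood
  have hbridge : Real.sqrt (Real.log N * D) ≤ X := by
    have hsq : Real.log N * D ≤ X ^ 2 := by
      have h1 : Real.log N * (D:ℝ) ≤ Real.log N * (1 + 6 * a / η + 9 * (Real.log N / η ^ 2)) :=
        mul_le_mul_of_nonneg_left hcount hlogpos.le
      have hη2 : (0:ℝ) < η ^ 2 := by positivity
      have expand : X ^ 2 = Real.log N * (1 + 6 * a / η + 9 * (Real.log N / η ^ 2)) := by
        rw [hXdef, ← ha2]
        ring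
      linarith [expand ▸ h1]
    calc Real.sqrt (Real.log N * D) ≤ Real.sqrt (X ^ 2) := Real.sqrt_le_sqrt hsq
      _ = X := Real.sqrt_sq hXpos.le
  have hmulD : a * Real.sqrt (D:ℝ) = Real.sqrt (Real.log N * D) := by
    rw [hadef, Real.sqrt_mul hlogpos.le]
  -- per-round + telescope
  have hsum : ∑ t ∈ Finset.range (T' + 1), adaAlgLoss c adv y t
      ≤ Phi N (cumLoss adv y (T' + 1)) (adaEta N c T')
        + ∑ t ∈ Finset.range (T' + 1),
            (if 1 - 2 * c t ≤ adaEta N c t then adaEta N c t / 8 else 0) := by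
    have h1 : ∑ t ∈ Finset.range (T' + 1), adaAlgLoss c adv y t
        ≤ ∑ t ∈ Finset.range (T' + 1),
            ((Phi N (cumLoss adv y (t+1)) (adaEta N c t) - Phi N (cumLoss adv y t) (adaEta N c t))
              + (if 1 - 2 * c t ≤ adaEta N c t then adaEta N c t / 8 else 0)) :=
      Finset.sum_le_sum (fun t _ => per_round hN c adv y hc hadv hy t)
    rw [Finset.sum_add_distrib] at h1
    have h2 := telescope hN c adv y T'
    linarith
  -- Hoeffding term bound
  have hIco : ∑ k ∈ Finset.Ico 2 D, Real.sqrt (Real.log N / (k:ℝ))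
      ≤ 2 * a * Real.sqrt (D:ℝ) - 2 * a := by
    have hterm : ∀ k ∈ Finset.Ico 2 D, Real.sqrt (Real.log N / (k:ℝ)) = a * (1 / Real.sqrt (k:ℝ)) := by
      intro k hk
      rw [Real.sqrt_div hlogpos.le, hadef, mul_one_div]
    rw [Finset.sum_congr rfl hterm, ← Finset.mul_sum]
    have hm := sum_inv_sqrt_le (D - 1) (by omega)
    rw [show D - 1 + 1 = D by omega] at hm
    have hs1 : Real.sqrt ((D - 1 : ℕ) : ℝ) ≤ Real.sqrt (D : ℝ) := by
      apply Real.sqrt_le_sqrt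
      exact_mod_cast Nat.sub_le D 1
    have h3 : a * ∑ k ∈ Finset.Ico 2 D, 1 / Real.sqrt (k:ℝ)
        ≤ a * (2 * Real.sqrt ((D - 1 : ℕ) : ℝ) - 2) := mul_le_mul_of_nonneg_left hm hapos.le
    nlinarith [h3, hs1, hapos]
  have hhoef : ∑ t ∈ Finset.range (T' + 1),
      (if 1 - 2 * c t ≤ adaEta N c t then adaEta N c t / 8 else 0) ≤ X / 4 := by
    have h1 := hoef_sum_le hN c hc0 (T' + 1)
    rw [← hDdef] at h1
    have h2 : (1:ℝ) / 8 + (∑ k ∈ Finset.Ico 2 D, Real.sqrt (Real.log N / (k:ℝ))) / 8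
        ≤ (2 * a * Real.sqrt (D:ℝ)) / 8 := by
      have : (1:ℝ) ≤ 2 * a := by linarith
      linarith [hIco]
    have h3 : (2 * a * Real.sqrt (D:ℝ)) / 8 = (a * Real.sqrt (D:ℝ)) / 4 := by ring
    have h4 : (a * Real.sqrt (D:ℝ)) / 4 ≤ X / 4 := by
      rw [hmulD]
      exact div_le_div_of_nonneg_right' hbridge
    calc ∑ t ∈ Finset.range (T' + 1),
        (if 1 - 2 * c t ≤ adaEta N c t then adaEta N c t / 8 else 0)
        ≤ 1 / 8 + (∑ k ∈ Finset.Ico 2 D, Real.sqrt (Real.log N / (k:ℝ))) / 8 := h1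
      _ ≤ (2 * a * Real.sqrt (D:ℝ)) / 8 := h2
      _ = (a * Real.sqrt (D:ℝ)) / 4 := h3
      _ ≤ X / 4 := h4
  -- learning-rate term bound
  have hlogX : Real.log N ≤ X := by
    have : Real.log N ≤ 3 * (Real.log N / η) := by
      rw [show 3 * (Real.log (N:ℝ) / η) = 3 * Real.log (N:ℝ) / η by ring, le_div_iff₀ hη0]
      nlinarith [mul_le_mul_of_nonneg_left hη1 hlogpos.le]
    linarith [hapos]
  have hetaT : Real.log N / adaEta N c T' ≤ X := by
    rcases Nat.eq_zero_or_pos T' with h0 | h0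
    · subst h0
      rw [adaEta, if_pos rfl, div_one]
      exact hlogX
    · rw [adaEta, if_neg (by omega : ¬ T' = 0)]
      set d := adaD N c T' with hddef
      clear_value d
      have hd1 : 1 ≤ d := by rw [hddef]; exact adaD_pos N c T'
      have hdD : d ≤ D := by
        rw [hDdef, hddef]; exact adaD_mono N c (Nat.le_succ T')
      have hdpos : (0:ℝ) < (d:ℝ) := by exact_mod_cast hd1
      rcases le_total 1 (Real.sqrt (Real.log N / (d:ℝ))) with h | h
      · rw [min_eq_right h, div_one]
        exact hlogX
      · rw [min_eq_left h]
        have hsd : 0 < Real.sqrt ((d:ℝ)) := Real.sqrt_pos.2 hdpos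
        have hrw : Real.sqrt (Real.log N / (d:ℝ)) = a / Real.sqrt (d:ℝ) := by
          rw [Real.sqrt_div hlogpos.le, hadef]
        rw [hrw]
        have hval : Real.log N / (a / Real.sqrt (d:ℝ)) = a * Real.sqrt (d:ℝ) := by
          rw [div_div_eq_mul_div, ← ha2]
          field_simp
        rw [hval]
        have hmono : Real.sqrt ((d:ℝ)) ≤ Real.sqrt ((D:ℝ)) := by
          apply Real.sqrt_le_sqrt
          exact_mod_cast hdD
        calc a * Real.sqrt (d:ℝ) ≤ a * Real.sqrt (D:ℝ) :=
              mul_le_mul_of_nonneg_left hmono hapos.le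
          _ = Real.sqrt (Real.log N * D) := hmulD
          _ ≤ X := hbridge
  -- best expert
  have : Nonempty (Fin N) := Fin.pos_iff_nonempty.1 (by omega)
  obtain ⟨i0, -, hmin⟩ := Finset.exists_min_image Finset.univ (cumLoss adv y (T' + 1))
    Finset.univ_nonempty
  have hInf : (⨅ i : Fin N, ∑ t ∈ Finset.range (T' + 1), expertLoss adv y t i)
      = cumLoss adv y (T' + 1) i0 := by
    have heq : (fun i : Fin N => ∑ t ∈ Finset.range (T' + 1), expertLoss adv y t i)
        = cumLoss adv y (T' + 1) := rfl
    rw [show (⨅ i : Fin N, ∑ t ∈ Finset.range (T' + 1), expertLoss adv y t i)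
        = ⨅ i : Fin N, cumLoss adv y (T' + 1) i from rfl]
    apply le_antisymm
    · exact ciInf_le (Set.Finite.bddBelow (Set.finite_range _)) i0
    · exact le_ciInf (fun j => hmin j (Finset.mem_univ j))
  have hPhi := Phi_le hN1 (cumLoss adv y (T' + 1)) (adaEta_pos hN c T') i0
  rw [hInf]
  have htot : ∑ t ∈ Finset.range (T' + 1), adaAlgLoss c adv y t
      ≤ cumLoss adv y (T' + 1) i0 + X + X / 4 := by
    calc ∑ t ∈ Finset.range (T' + 1), adaAlgLoss c adv y t
        ≤ Phi N (cumLoss adv y (T' + 1)) (adaEta N c T') + ∑ t ∈ Finset.range (T' + 1),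
            (if 1 - 2 * c t ≤ adaEta N c t then adaEta N c t / 8 else 0) := hsum
      _ ≤ (cumLoss adv y (T' + 1) i0 + Real.log N / adaEta N c T') + X / 4 :=
          add_le_add hPhi hhoef
      _ ≤ cumLoss adv y (T' + 1) i0 + X + X / 4 :=
          add_le_add (add_le_add le_rfl hetaT) le_rfl
  have hXfin : X + X / 4 = (15 / 4) * (Real.log N / η) + (5 / 4) * a := by
    rw [hXdef]; ring
  calc (∑ t ∈ Finset.range (T' + 1), adaAlgLoss c adv y t) - cumLoss adv y (T' + 1) i0
      ≤ (cumLoss adv y (T' + 1) i0 + X + X / 4) - cumLoss adv y (T' + 1) i0 :=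
        sub_le_sub_right htot _
    _ = X + X / 4 := by ring
    _ = (15 / 4) * (Real.log N / η) + (5 / 4) * a := hXfin
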